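/- (Theorem 6.1, main identity) Let n be a positive integer, let P and P̃ be n×n real column-stochastic matrices, let α ∈ (0,1), and let q ∈ ℝⁿ be a stochastic vector. Let r satisfy r = αPr + (1−α)q and let r̃ satisfy r̃ = αP̃r̃ + (1−α)q. Then the series c = Σ_{i=0}^∞ α^{i+1} P̃^i (P̃ − P) r converges, and c = r̃ − r. -/

import Mathlib

/-- An `n × n` real matrix is column-stochastic if all entries are nonnegative
and each column sums to 1. -/
def ColStochastic {n : ℕ} (P : Matrix (Fin n) (Fin n) ℝ) : Prop :=
  (∀ i j, 0 ≤ P i j) ∧ ∀ j, ∑ i, P i j = 1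

/-- A vector is stochastic if its entries are nonnegative and sum to 1. -/
def StochasticVec {n : ℕ} (q : Fin n → ℝ) : Prop :=
  (∀ i, 0 ≤ q i) ∧ ∑ i, q i = 1

lemma colStochastic_mul {n : ℕ} {A B : Matrix (Fin n) (Fin n) ℝ}
    (hA : ColStochastic A) (hB : ColStochastic B) : ColStochastic (A * B) := by
  constructor
  · intro i j
    rw [Matrix.mul_apply]
    exact Finset.sum_nonneg fun k _ => mul_nonneg (hA.1 i k) (hB.1 k j)
  · intro j
    simp only [Matrix.mul_apply]
    rw [Finset.sum_comm]
    calc ∑ k, ∑ i, A i k * B k j = ∑ k, (∑ i, A i k) * B k j := by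
          simp [Finset.sum_mul]
      _ = ∑ k, B k j := by simp [hA.2]
      _ = 1 := hB.2 j

lemma colStochastic_pow {n : ℕ} {A : Matrix (Fin n) (Fin n) ℝ}
    (hA : ColStochastic A) (k : ℕ) : ColStochastic (A ^ k) := by
  induction k with
  | zero =>
    constructor
    · intro i j
      simp [Matrix.one_apply]
      positivity
    · intro j
      simp [Matrix.one_apply]
  | succ k ih =>
    rw [pow_succ]
    exact colStochastic_mul ih hA

lemma mulVec_norm_le {n : ℕ} {M : Matrix (Fin n) (Fin n) ℝ} (hM : ColStochastic M)
    (v : Fin n → ℝ) : ‖M.mulVec v‖ ≤ ∑ k, |v k| := by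
  have hC : 0 ≤ ∑ k, |v k| := Finset.sum_nonneg fun k _ => abs_nonneg _
  rw [pi_norm_le_iff_of_nonneg hC]
  intro j
  rw [Matrix.mulVec, dotProduct, Real.norm_eq_abs]
  calc |∑ k, M j k * v k| ≤ ∑ k, |M j k * v k| := Finset.abs_sum_le_sum_abs _ _
    _ ≤ ∑ k, |v k| := by
        apply Finset.sum_le_sum
        intro k _
        rw [abs_mul, abs_of_nonneg (hM.1 j k)]
        have h1 : M j k ≤ 1 := by
          have := Finset.single_le_sum (f := fun i => M i k)
            (fun i _ => hM.1 i k) (Finset.mem_univ j)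
          rw [hM.2 k] at this
          exact this
        nlinarith [abs_nonneg (v k)]

/-- Theorem 6.1, main identity: the offset series
`c = Σ_{i=0}^∞ α^{i+1} P̃^i (P̃ − P) r` converges and equals `r̃ − r`. -/
theorem ppr_offset_series_eq_diff
    {n : ℕ} (hn : 0 < n) (P Pt : Matrix (Fin n) (Fin n) ℝ)
    (hP : ColStochastic P) (hPt : ColStochastic Pt)
    (α : ℝ) (hα : α ∈ Set.Ioo (0 : ℝ) 1) (q : Fin n → ℝ) (hq : StochasticVec q)
    (r rt : Fin n → ℝ)
    (hr : r = α • P.mulVec r + (1 - α) • q)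
    (hrt : rt = α • Pt.mulVec rt + (1 - α) • q) :
    ∃ c : Fin n → ℝ,
      HasSum (fun i : ℕ => α ^ (i + 1) • (Pt ^ i).mulVec ((Pt - P).mulVec r)) c ∧
      c = rt - r := by
  obtain ⟨hα0, hα1⟩ := hα
  set v : Fin n → ℝ := (Pt - P).mulVec r with hv
  set d : Fin n → ℝ := rt - r with hd
  -- key recurrence
  have hdd : d = α • Pt.mulVec d + α • v := by
    rw [hd, hv]
    conv_lhs => rw [hrt, hr]
    simp only [Matrix.mulVec_sub, Matrix.sub_mulVec, smul_sub]
    module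
  -- telescoping partial sums
  have key : ∀ N : ℕ, ∑ i ∈ Finset.range N, α ^ (i + 1) • (Pt ^ i).mulVec v
      = d - α ^ N • (Pt ^ N).mulVec d := by
    intro N
    induction N with
    | zero => simp
    | succ N ih =>
      rw [Finset.sum_range_succ, ih,
        show Pt ^ (N + 1) = Pt ^ N * Pt from pow_succ Pt N, ← Matrix.mulVec_mulVec]
      have hlin : (Pt ^ N).mulVec d
          = α • (Pt ^ N).mulVec (Pt.mulVec d) + α • (Pt ^ N).mulVec v := by
        conv_lhs => rw [hdd]
        simp [Matrix.mulVec_add, Matrix.mulVec_smul]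
      rw [hlin, pow_succ]
      module
  -- summability
  set C : ℝ := ∑ k, |v k| with hC
  have hC0 : 0 ≤ C := Finset.sum_nonneg fun k _ => abs_nonneg _
  have hbound : ∀ i : ℕ, ‖α ^ (i + 1) • (Pt ^ i).mulVec v‖ ≤ (C * α) * α ^ i := by
    intro i
    rw [norm_smul, Real.norm_eq_abs, abs_of_nonneg (by positivity)]
    have := mulVec_norm_le (colStochastic_pow hPt i) v
    calc α ^ (i + 1) * ‖(Pt ^ i).mulVec v‖ ≤ α ^ (i + 1) * C := by
          apply mul_le_mul_of_nonneg_left (this.trans_eq rfl) (by positivity)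
      _ = (C * α) * α ^ i := by ring
  have hsum : Summable (fun i : ℕ => α ^ (i + 1) • (Pt ^ i).mulVec v) := by
    apply Summable.of_norm_bounded ((summable_geometric_of_lt_one (le_of_lt hα0)
      hα1).mul_left (C * α)) hbound
  refine ⟨∑' i, α ^ (i + 1) • (Pt ^ i).mulVec v, hsum.hasSum, ?_⟩
  have h1 : Filter.Tendsto (fun N => ∑ i ∈ Finset.range N,
      α ^ (i + 1) • (Pt ^ i).mulVec v) Filter.atTop
      (nhds (∑' i, α ^ (i + 1) • (Pt ^ i).mulVec v)) :=
    hsum.hasSum.tendsto_sum_nat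
  have h2 : Filter.Tendsto (fun N : ℕ => d - α ^ N • (Pt ^ N).mulVec d)
      Filter.atTop (nhds d) := by
    have hz : Filter.Tendsto (fun N : ℕ => α ^ N • (Pt ^ N).mulVec d)
        Filter.atTop (nhds 0) := by
      set D : ℝ := ∑ k, |d k| with hD
      refine squeeze_zero_norm (a := fun N : ℕ => D * α ^ N) ?_ ?_
      · intro N
        rw [norm_smul, Real.norm_eq_abs, abs_of_nonneg (by positivity)]
        have := mulVec_norm_le (colStochastic_pow hPt N) d
        calc α ^ N * ‖(Pt ^ N).mulVec d‖ ≤ α ^ N * D :=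
              mul_le_mul_of_nonneg_left this (by positivity)
          _ = D * α ^ N := by ring
      · rw [show (0 : ℝ) = D * 0 by ring]
        exact (tendsto_pow_atTop_nhds_zero_of_lt_one (le_of_lt hα0) hα1).const_mul D
    have := Filter.Tendsto.sub (tendsto_const_nhds (x := d)) hz
    simpa using this
  rw [funext key] at h1
  rw [hd] at h2
  exact tendsto_nhds_unique h1 h2
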